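/- Let $E$ be a Banach space and $C\in(0,1]$. Suppose that for all $x\in S_E$, $x^{**}\in S_{E^{**}}$ and $\varepsilon>0$ there exists $x_0\in E$ with $\|\pm x+Cx^{**}-x_0\|<1+\varepsilon$. Then $E$ is an $M(1,C)$-ideal in $E^{**}$, i.e. the canonical projection $\mathcal{Q}$ on $E^{***}$ onto $E^*$ with kernel $E^\perp$ satisfies $\|\mathcal{Q}f\|+C\|f-\mathcal{Q}f\|\le\|f\|$ for all $f\in E^{***}$. -/

import Mathlib

/-- The topological dual of a seminormed space `E` (as in the older Mathlib, where it was
`NormedSpace.Dual`; it is now called `StrongDual`). -/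
abbrev NormedSpace.Dual (𝕜 : Type*) [NontriviallyNormedField 𝕜] (E : Type*)
    [SeminormedAddCommGroup E] [NormedSpace 𝕜 E] : Type _ :=
  E →L[𝕜] 𝕜

open NormedSpace

/-- Near-norm-attaining unit vector for a nonzero functional. -/
lemma exists_unit_near {F : Type*} [NormedAddCommGroup F] [NormedSpace ℝ F]
    (φ : Dual ℝ F) (hφ : φ ≠ 0) {ε : ℝ} (hε : 0 < ε) :
    ∃ y : F, ‖y‖ = 1 ∧ ‖φ‖ - ε < φ y := by
  have hn : 0 < ‖φ‖ := norm_pos_iff.mpr hφ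
  set ε' := min ε (‖φ‖ / 2) with hε'def
  have hε' : 0 < ε' := lt_min hε (by positivity)
  have hε'le : ε' ≤ ε := min_le_left _ _
  have hε'le2 : ε' ≤ ‖φ‖ / 2 := min_le_right _ _
  have hr : ‖φ‖ - ε' < ‖φ‖ := by linarith
  obtain ⟨x, hx1, hx2⟩ := φ.exists_lt_apply_of_lt_opNorm hr
  have habs : ‖φ‖ - ε' < |φ x| := by simpa [Real.norm_eq_abs] using hx2
  have hpos : 0 < |φ x| := lt_of_le_of_lt (by linarith) habs
  set y₀ : F := if 0 ≤ φ x then x else -x with hy₀def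
  have hφy₀ : φ y₀ = |φ x| := by
    by_cases hc : 0 ≤ φ x
    · simp [hy₀def, hc, abs_of_nonneg hc]
    · push_neg at hc
      simp [hy₀def, not_le.mpr hc, abs_of_neg hc]
  have hy₀norm : ‖y₀‖ = ‖x‖ := by
    by_cases hc : 0 ≤ φ x <;> simp [hy₀def, hc]
  have hy₀ne : y₀ ≠ 0 := by
    intro h0
    rw [h0, map_zero] at hφy₀
    exact absurd hφy₀.symm (ne_of_gt hpos)
  have hy₀pos : 0 < ‖y₀‖ := norm_pos_iff.mpr hy₀ne
  refine ⟨‖y₀‖⁻¹ • y₀, ?_, ?_⟩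
  · rw [norm_smul, Real.norm_eq_abs, abs_of_pos (by positivity)]
    field_simp
  · have hinv : 1 ≤ ‖y₀‖⁻¹ := by
      rw [le_inv_comm₀ one_pos hy₀pos]
      simpa [hy₀norm] using hx1.le
    have : φ (‖y₀‖⁻¹ • y₀) = ‖y₀‖⁻¹ * |φ x| := by rw [map_smul, smul_eq_mul, hφy₀]
    rw [this]
    have h1 : |φ x| ≤ ‖y₀‖⁻¹ * |φ x| := le_mul_of_one_le_left hpos.le hinv
    linarith


/-- The canonical projection on `E***` with range (the canonical image of) `E*`
and kernel the annihilator of `E`. -/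
noncomputable def triQ (E : Type*) [NormedAddCommGroup E] [NormedSpace ℝ E]
    (f : Dual ℝ (Dual ℝ (Dual ℝ E))) : Dual ℝ (Dual ℝ (Dual ℝ E)) :=
  inclusionInDoubleDual ℝ (Dual ℝ E) (f.comp (inclusionInDoubleDual ℝ E))

theorem stmt8 {E : Type*} [NormedAddCommGroup E] [NormedSpace ℝ E] [CompleteSpace E]
    (C : ℝ) (hC0 : 0 < C) (hC1 : C ≤ 1)
    (hyp : ∀ x : E, ‖x‖ = 1 → ∀ xss : Dual ℝ (Dual ℝ E), ‖xss‖ = 1 → ∀ ε : ℝ, 0 < ε →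
      ∃ x₀ : E,
        ‖inclusionInDoubleDual ℝ E x + C • xss - inclusionInDoubleDual ℝ E x₀‖ < 1 + ε ∧
        ‖-(inclusionInDoubleDual ℝ E x) + C • xss - inclusionInDoubleDual ℝ E x₀‖ < 1 + ε) :
    ∀ f : Dual ℝ (Dual ℝ (Dual ℝ E)),
      ‖triQ E f‖ + C * ‖f - triQ E f‖ ≤ ‖f‖ := by
  intro f
  set J := inclusionInDoubleDual ℝ E with hJ
  set g : Dual ℝ E := f.comp J with hgdef
  have hQ : triQ E f = inclusionInDoubleDual ℝ (Dual ℝ E) g := rfl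
  have hQnorm : ‖triQ E f‖ = ‖g‖ := by
    rw [hQ]
    exact (inclusionInDoubleDualLi ℝ (E := Dual ℝ E)).norm_map g
  have hgle : ‖g‖ ≤ ‖f‖ := by
    exact ContinuousLinearMap.opNorm_le_bound _ (norm_nonneg f) fun x =>
      (f.le_opNorm (J x)).trans (mul_le_mul_of_nonneg_left (double_dual_bound ℝ E x) (norm_nonneg f))
  set h := f - triQ E f with hhdef
  have hQapp : ∀ y : Dual ℝ (Dual ℝ E), triQ E f y = y g := fun y => by
    rw [hQ]; exact dual_def ℝ (Dual ℝ E) g y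
  have hfy : ∀ y : Dual ℝ (Dual ℝ E), f y = y g + h y := fun y => by
    simp [hhdef, hQapp y]
  rw [hQnorm]
  by_cases hh0 : h = 0
  · rw [hh0]
    simpa using hgle
  by_cases hg0 : g = 0
  · have hfh : ‖h‖ = ‖f‖ := by
      rw [hhdef, hQ, hg0, map_zero, sub_zero]
    have hf0 : 0 ≤ ‖f‖ := norm_nonneg f
    rw [hg0, hfh]
    simp only [norm_zero, zero_add]
    have := mul_le_mul_of_nonneg_right hC1 hf0
    linarith
  apply le_of_forall_pos_le_add
  intro δ hδ
  have hK : (0:ℝ) < ‖f‖ + ‖g‖ + 2 + C := by positivity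
  obtain ⟨ε, hε, hεK⟩ : ∃ ε : ℝ, 0 < ε ∧ ε * (‖f‖ + ‖g‖ + 2 + C) ≤ δ :=
    ⟨δ / (‖f‖ + ‖g‖ + 2 + C), div_pos hδ hK,
      le_of_eq (div_mul_cancel₀ δ (ne_of_gt hK))⟩
  obtain ⟨x, hx1, hx2⟩ := exists_unit_near g hg0 hε
  obtain ⟨F, hF1, hF2⟩ := exists_unit_near (F := Dual ℝ (Dual ℝ E)) h hh0 hε
  obtain ⟨x₀, hA, hB⟩ := hyp x hx1 F hF1 ε hε
  set A := J x + C • F - J x₀ with hAdef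
  set B := -(J x) + C • F - J x₀ with hBdef
  -- evaluate f on A
  have hfA : f A = g x + C * (F g) + C * (h F) - g x₀ := by
    have : f A = f (J x) + C * f F - f (J x₀) := by
      rw [hAdef, map_sub, map_add, map_smul, smul_eq_mul]
    rw [this, hfy F]
    have h1 : f (J x) = g x := rfl
    have h2 : f (J x₀) = g x₀ := rfl
    rw [h1, h2]; ring
  have h1 : f A ≤ ‖f‖ * (1 + ε) := by
    calc f A ≤ |f A| := le_abs_self _
    _ ≤ ‖f‖ * ‖A‖ := by simpa [Real.norm_eq_abs] using f.le_opNorm A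
    _ ≤ ‖f‖ * (1 + ε) := mul_le_mul_of_nonneg_left hA.le (norm_nonneg f)
  -- evaluate B on g
  have hBg : B g = -(g x) + C * (F g) - g x₀ := by
    rw [hBdef]
    simp only [ContinuousLinearMap.sub_apply, ContinuousLinearMap.add_apply,
      ContinuousLinearMap.neg_apply, ContinuousLinearMap.smul_apply, smul_eq_mul]
    have h1 : J x g = g x := dual_def ℝ E x g
    have h2 : J x₀ g = g x₀ := dual_def ℝ E x₀ g
    rw [h1, h2]
  have h2 : -((1 + ε) * ‖g‖) ≤ B g := by
    have hb : |B g| ≤ ‖B‖ * ‖g‖ := by simpa [Real.norm_eq_abs] using B.le_opNorm g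
    have hb2 : ‖B‖ * ‖g‖ ≤ (1 + ε) * ‖g‖ :=
      mul_le_mul_of_nonneg_right hB.le (norm_nonneg g)
    exact (abs_le.mp (hb.trans hb2)).1
  rw [hBg] at h2
  rw [hfA] at h1
  -- combine
  have hCb : C * (‖h‖ - ε) ≤ C * (h F) := mul_le_mul_of_nonneg_left hF2.le hC0.le
  have e1 : ‖f‖ * (1 + ε) = ‖f‖ + ‖f‖ * ε := by ring
  have e2 : (1 + ε) * ‖g‖ = ‖g‖ + ε * ‖g‖ := by ring
  have e3 : C * (‖h‖ - ε) = C * ‖h‖ - C * ε := by ring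
  have e4 : ε * (‖f‖ + ‖g‖ + 2 + C) = ε * ‖f‖ + ε * ‖g‖ + 2 * ε + ε * C := by ring
  linarith
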